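/- For every odd integer ℓ ≥ 17, there exists a palindrome of length ℓ over the ternary alphabet {0,1,2} whose critical exponent is exactly 7/4: it contains a factor of length p with period q satisfying p/q ≥ 7/4, but contains no factor of length p with period q satisfying p/q > 7/4. -/

import Mathlib

/-- A word `x` has period `q` (with `1 ≤ q ≤ |x|`) if `x[i] = x[i+q]`
whenever both indices are in range. -/
def HasPeriod {A : Type*} (x : List A) (q : ℕ) : Prop :=
  1 ≤ q ∧ q ≤ x.length ∧ ∀ i : ℕ, i + q < x.length → x[i]? = x[i + q]?

/-- `w` contains an `e`-power: a nonempty factor of length `p` with period `q`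
and `p/q ≥ e`. -/
def ContainsPowGe {A : Type*} (w : List A) (e : ℚ) : Prop :=
  ∃ x : List A, ∃ q : ℕ, x ≠ [] ∧ x <:+: w ∧ HasPeriod x q ∧
    e ≤ (x.length : ℚ) / (q : ℚ)

/-- `w` contains an `e⁺`-power: a nonempty factor of length `p` with period `q`
and `p/q > e`. -/
def ContainsPowGt {A : Type*} (w : List A) (e : ℚ) : Prop :=
  ∃ x : List A, ∃ q : ℕ, x ≠ [] ∧ x <:+: w ∧ HasPeriod x q ∧
    e < (x.length : ℚ) / (q : ℚ)

/-- The critical exponent of `w` is exactly `e`: some nonempty factor has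
exponent at least `e`, and no nonempty factor has exponent exceeding `e`. -/
def CritExpIs {A : Type*} (w : List A) (e : ℚ) : Prop :=
  ContainsPowGe w e ∧ ¬ ContainsPowGt w e

namespace Dej

abbrev T3 := Fin 3

def s0 : List T3 := [0,1,2,0,2,1,2,0,1,2,1,0,2,1,2,0,2,1,0]

def S (t : ℕ) : T3 := s0.getD t 0

def phi (w : List T3) : List T3 := w.flatMap (fun a => s0.map (fun x => a + x))

abbrev Rep (w : List T3) (i q n : ℕ) : Prop := ∀ t < n, w[i+t]? = w[i+t+q]?

def BadIdx (w : List T3) : Prop :=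
  ∃ i q n, 1 ≤ q ∧ i + q + n ≤ w.length ∧ 3*q < 4*n ∧ Rep w i q n

lemma phi_cons (a : T3) (w : List T3) :
    phi (a :: w) = s0.map (fun x => a + x) ++ phi w := rfl

lemma phi_append (u v : List T3) : phi (u ++ v) = phi u ++ phi v := by
  simp [phi]

lemma length_phi (w : List T3) : (phi w).length = 19 * w.length := by
  induction w with
  | nil => rfl
  | cons a w ih =>
    rw [phi_cons, List.length_append, ih]
    simp [s0]
    omega

lemma s0_getElem? : ∀ p < 19, s0[p]? = some (S p) := by decide

lemma phi_getElem? (w : List T3) (p : ℕ) :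
    (phi w)[p]? = (w[p/19]?).map (fun a => a + S (p % 19)) := by
  induction w generalizing p with
  | nil => simp [phi]
  | cons a w ih =>
    rw [phi_cons]
    by_cases hp : p < 19
    · rw [List.getElem?_append_left (by simp [s0]; omega), List.getElem?_map,
        s0_getElem? p hp]
      have h1 : p / 19 = 0 := by omega
      have h2 : p % 19 = p := by omega
      rw [h1, h2]
      simp
    · obtain ⟨r, rfl⟩ : ∃ r, p = 19 + r := ⟨p - 19, by omega⟩
      rw [List.getElem?_append_right (by simp [s0])]
      have h0 : (19 + r) - (s0.map (fun x => a + x)).length = r := by simp [s0]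
      rw [h0, ih]
      have h1 : (19 + r) / 19 = r / 19 + 1 := by omega
      have h2 : (19 + r) % 19 = r % 19 := by omega
      rw [h1, h2]
      simp

lemma rep_mono {w : List T3} {i q n m : ℕ} (h : Rep w i q n) (hm : m ≤ n) :
    Rep w i q m := fun t ht => h t (by omega)

lemma badIdx_of_infix {x w : List T3} (hinf : x <:+: w) (hb : BadIdx x) :
    BadIdx w := by
  obtain ⟨s, t, rfl⟩ := hinf
  obtain ⟨i, q, n, hq, hlen, hqn, hrep⟩ := hb
  refine ⟨s.length + i, q, n, hq, by simp; omega, hqn, fun j hj => ?_⟩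
  have key : ∀ m, m < x.length → (s ++ (x ++ t))[s.length + m]? = x[m]? := by
    intro m hm
    rw [List.getElem?_append_right (by simp : s.length ≤ s.length + m)]
    have e : s.length + m - s.length = m := by omega
    rw [e, List.getElem?_append_left hm]
  rw [List.append_assoc]
  have h1 : s.length + i + j = s.length + (i + j) := by omega
  rw [h1]
  have h2 : s.length + (i + j) + q = s.length + (i + j + q) := by omega
  rw [h2, key _ (by omega), key _ (by omega)]
  exact hrep j hj

lemma containsPowGt_iff_badIdx (w : List T3) :
    ContainsPowGt w (7/4) ↔ BadIdx w := by
  constructor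
  · rintro ⟨x, q, hne, hinf, ⟨hq1, hqle, hper⟩, hlt⟩
    obtain ⟨s, t, rfl⟩ := hinf
    have hq0 : (0:ℚ) < (q:ℚ) := by exact_mod_cast hq1
    rw [div_lt_div_iff₀ (by norm_num) hq0] at hlt
    have hnat : 7 * q < x.length * 4 := by exact_mod_cast hlt
    refine ⟨s.length, q, x.length - q, hq1, by simp; omega, by omega, fun j hj => ?_⟩
    have key : ∀ m, m < x.length → (s ++ x ++ t)[s.length + m]? = x[m]? := by
      intro m hm
      rw [List.append_assoc, List.getElem?_append_right (by simp : s.length ≤ s.length + m)]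
      have e : s.length + m - s.length = m := by omega
      rw [e, List.getElem?_append_left (by omega)]
    have h2 : s.length + j + q = s.length + (j + q) := by omega
    rw [h2, key _ (by omega), key _ (by omega)]
    exact hper j (by omega)
  · rintro ⟨i, q, n, hq, hlen, hqn, hrep⟩
    refine ⟨((w.drop i).take (q+n)), q, ?_, ?_, ⟨hq, ?_, ?_⟩, ?_⟩
    · have : ((w.drop i).take (q+n)).length = q + n := by simp; omega
      intro h
      rw [h] at this
      simp at this
      omega
    · exact (List.take_prefix _ _).isInfix.trans (List.drop_suffix i w).isInfix
    · simp; omega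
    · intro j hj
      have hlen' : ((w.drop i).take (q+n)).length = q + n := by simp; omega
      rw [hlen'] at hj
      rw [List.getElem?_take, List.getElem?_take, if_pos (by omega), if_pos (by omega),
        List.getElem?_drop, List.getElem?_drop]
      have h2 : i + (j + q) = i + j + q := by omega
      rw [h2]
      exact hrep j (by omega)
    · have hlen' : ((w.drop i).take (q+n)).length = q + n := by simp; omega
      rw [hlen']
      rw [div_lt_div_iff₀ (by norm_num) (by exact_mod_cast hq)]
      have : 7 * q < (q + n) * 4 := by omega
      exact_mod_cast this


set_option synthInstance.maxSize 2000 in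
set_option maxHeartbeats 4000000 in
lemma FC : ∀ rep ∈ [[(0:T3)],[0,1],[0,2],[0,1,2],[0,1,0],[0,2,0],[0,2,1]],
    ∀ q < 23, ∀ n < 18, ∀ i < 19,
    (1 ≤ q ∧ 3*q < 4*n ∧ 4*n ≤ 3*q+4 ∧ i + q + n ≤ 19 * rep.length) →
    ¬ Rep (phi rep) i q n := by decide

lemma DF : ∀ a < 19, ∀ b < 19, ¬ ∀ t < 13, ¬ ((a+t)%19 ≤ 12 ∧ (b+t)%19 ≤ 12) := by decide

lemma DF23 : ∀ a < 19, ¬ ∀ t < 12, ¬ ((a+t)%19 ≤ 12 ∧ (a+23+t)%19 ≤ 12) := by decide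

lemma F7 : ∀ a < 13, ∀ b < 13, ∀ d : T3,
    (∀ j < 7, S (a+j) = S (b+j) + d) → a = b := by decide


lemma classify (u : List T3) (h1 : 1 ≤ u.length) (h3 : u.length ≤ 3)
    (hadj : ∀ j, j + 2 ≤ u.length → u[j]? ≠ u[j+1]?) :
    ∃ c : T3, ∃ rep ∈ [[(0:T3)],[0,1],[0,2],[0,1,2],[0,1,0],[0,2,0],[0,2,1]],
      u = rep.map (fun x => c + x) := by
  rcases u with _ | ⟨a, _ | ⟨b, _ | ⟨c, _ | ⟨d, rest⟩⟩⟩⟩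
  · simp at h1
  · exact ⟨a, [0], by decide, by simp⟩
  · have hab : a ≠ b := by simpa using hadj 0 (by simp)
    have key : ∀ a b : T3, a ≠ b →
        ([a,b] = [0,1].map (fun x => a + x) ∨ [a,b] = [0,2].map (fun x => a + x)) := by decide
    rcases key a b hab with h | h
    · exact ⟨a, [0,1], by decide, h⟩
    · exact ⟨a, [0,2], by decide, h⟩
  · have hab : a ≠ b := by simpa using hadj 0 (by simp)
    have hbc : b ≠ c := by simpa using hadj 1 (by simp)
    have key : ∀ a b c : T3, a ≠ b → b ≠ c →
        ([a,b,c] = [0,1,2].map (fun x => a + x) ∨ [a,b,c] = [0,1,0].map (fun x => a + x) ∨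
         [a,b,c] = [0,2,0].map (fun x => a + x) ∨ [a,b,c] = [0,2,1].map (fun x => a + x)) := by
      decide
    rcases key a b c hab hbc with h | h | h | h
    · exact ⟨a, [0,1,2], by decide, h⟩
    · exact ⟨a, [0,1,0], by decide, h⟩
    · exact ⟨a, [0,2,0], by decide, h⟩
    · exact ⟨a, [0,2,1], by decide, h⟩
  · simp at h3; omega

lemma phi_map_add (c : T3) (l : List T3) :
    phi (l.map (fun x => c + x)) = (phi l).map (fun x => c + x) := by
  induction l with
  | nil => rfl
  | cons a l ih =>
    rw [List.map_cons, phi_cons, phi_cons, List.map_append, ih, List.map_map]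
    congr 1
    apply List.map_congr_left
    intro x _
    simp [add_assoc]

lemma phi_free {w : List T3} (hw : ¬ BadIdx w) : ¬ BadIdx (phi w) := by
  rintro ⟨i, q, n1, hq, hlen1, hqn1, hrep1⟩
  rw [length_phi] at hlen1
  set n := 3*q/4 + 1 with hn
  have hnn : n ≤ n1 := by omega
  have hrep : Rep (phi w) i q n := rep_mono hrep1 hnn
  have hlen : i + q + n ≤ 19 * w.length := by omega
  have hqn : 3*q < 4*n ∧ 4*n ≤ 3*q + 4 := by omega
  have key : ∀ p, i ≤ p → p < i + n →
      (w[p/19]?).map (fun a => a + S (p % 19)) =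
      (w[(p+q)/19]?).map (fun a => a + S ((p+q) % 19)) := by
    intro p h1 h2
    have h := hrep (p - i) (by omega)
    rw [show i + (p - i) = p from by omega] at h
    rw [phi_getElem?, phi_getElem?] at h
    exact h
  by_cases hq23 : q < 23
  · -- small period: finite check
    set j0 := i / 19 with hj0
    set i' := i % 19 with hi'
    set u := (w.drop j0).take 3 with hu
    have hulen : u.length = min 3 (w.length - j0) := by simp [hu]
    have hu1 : 1 ≤ u.length := by omega
    have hu3 : u.length ≤ 3 := by omega
    have hbound : i' + q + n ≤ 19 * u.length := by omega
    have hu_inf : u <:+: w := (List.take_prefix _ _).isInfix.trans (List.drop_suffix _ _).isInfix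
    have hu_free : ¬ BadIdx u := fun hb => hw (badIdx_of_infix hu_inf hb)
    have hu_get : ∀ j, j < 3 → u[j]? = w[j0+j]? := by
      intro j hj
      rw [hu, List.getElem?_take, if_pos hj, List.getElem?_drop]
    have htr : ∀ r, r < 19 * u.length → (phi u)[r]? = (phi w)[19*j0 + r]? := by
      intro r hr
      rw [phi_getElem?, phi_getElem?, hu_get _ (by omega),
        show (19*j0 + r)/19 = j0 + r/19 from by omega,
        show (19*j0 + r) % 19 = r % 19 from by omega]
    have hrepu : Rep (phi u) i' q n := by
      intro t ht
      rw [htr _ (by omega), htr _ (by omega),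
        show 19*j0 + (i' + t) = i + t from by omega,
        show 19*j0 + (i' + t + q) = i + t + q from by omega]
      exact hrep t ht
    have hadj : ∀ j, j + 2 ≤ u.length → u[j]? ≠ u[j+1]? := by
      intro j hj heq
      exact hu_free ⟨j, 1, 1, le_refl 1, by omega, by omega, fun t ht => by
        have ht0 : t = 0 := by omega
        subst ht0
        simpa using heq⟩
    obtain ⟨c, rep, hmem, hrepe⟩ := classify u hu1 hu3 hadj
    have hlen_eq : u.length = rep.length := by rw [hrepe]; simp
    have hinj : Function.Injective (fun x : T3 => c + x) := fun x y hxy => by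
      simpa using congrArg (fun z => -c + z) hxy
    have hrepr : Rep (phi rep) i' q n := by
      intro t ht
      have h := hrepu t ht
      rw [hrepe, phi_map_add, List.getElem?_map, List.getElem?_map] at h
      exact Option.map_injective hinj h
    exact FC rep hmem q (by omega) n (by omega) i' (by omega)
      ⟨hq, by omega, by omega, by omega⟩ hrepr
  · push_neg at hq23
    by_cases hr : q % 19 = 0
    · -- aligned: pull the repetition back to w
      set q' := q / 19 with hq'
      set j0 := i / 19 with hj0
      set K := (i + q + n - 1)/19 - j0 + 1 with hK
      apply hw
      refine ⟨j0, q', K - q', by omega, by omega, by omega, ?_⟩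
      intro t ht
      set p := max i (19*(j0+t)) with hp
      have h1 : i ≤ p := le_max_left _ _
      have h2 : p < i + n := by omega
      have h := key p h1 h2
      rw [show (p+q) % 19 = p % 19 from by omega] at h
      have hinj2 : Function.Injective (fun a : T3 => a + S (p % 19)) := fun x y hxy => by
        simpa using congrArg (fun z => z - S (p % 19)) hxy
      have h' := Option.map_injective hinj2 h
      rw [show p / 19 = j0 + t from by omega,
        show (p+q)/19 = j0 + t + q' from by omega] at h'
      exact h'
    · -- misaligned: synchronization contradiction
      have hex : ∃ t, (i+t) % 19 ≤ 12 ∧ (i+t+q) % 19 ≤ 12 ∧ t + 7 ≤ n := by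
        by_cases h24 : 24 ≤ q
        · have hD := DF (i % 19) (by omega) ((i+q) % 19) (by omega)
          push_neg at hD
          obtain ⟨t, ht13, hA, hB⟩ := hD
          exact ⟨t, by omega, by omega, by omega⟩
        · have hq233 : q = 23 := by omega
          have hD := DF23 (i % 19) (by omega)
          push_neg at hD
          obtain ⟨t, ht12, hA, hB⟩ := hD
          exact ⟨t, by omega, by omega, by omega⟩
      obtain ⟨t, hA, hB, htn⟩ := hex
      set p0 := i + t with hp0
      set a := p0 % 19 with ha
      set b := (p0 + q) % 19 with hb
      set U := p0 / 19 with hU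
      set V := (p0 + q) / 19 with hV
      have hUw : U < w.length := by omega
      have hVw : V < w.length := by omega
      have hj7 : ∀ j, j < 7 → S (a + j) = S (b + j) + (w[V]'hVw - w[U]'hUw) := by
        intro j hj
        have h := key (p0 + j) (by omega) (by omega)
        rw [show (p0+j)/19 = U from by omega, show (p0+j) % 19 = a + j from by omega,
          show (p0+j+q)/19 = V from by omega, show (p0+j+q) % 19 = b + j from by omega,
          List.getElem?_eq_getElem hUw, List.getElem?_eq_getElem hVw] at h
        simp only [Option.map_some] at h
        have h2 := Option.some.inj h
        have h3 : w[U]'hUw + S (a+j) = w[U]'hUw + (S (b+j) + (w[V]'hVw - w[U]'hUw)) := by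
          rw [h2]; abel
        exact add_left_cancel h3
      have hab := F7 a (by omega) b (by omega) _ (fun j hj => hj7 j hj)
      omega

end Dej

namespace Dej

lemma s0_map_reverse (a : T3) :
    (s0.map (fun x => a + x)).reverse = s0.map (fun x => a + x) := by
  fin_cases a <;> decide

lemma reverse_phi (w : List T3) : (phi w).reverse = phi w.reverse := by
  induction w with
  | nil => rfl
  | cons a w ih =>
    rw [phi_cons, List.reverse_append, ih, s0_map_reverse, List.reverse_cons, phi_append]
    simp [phi]

def X (c : T3) : List T3 := [1,2,0,2,1,2,0,1,2,1,0,2,1,2,0,2,1].map (fun x => c + x)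

def Y1 (c : T3) : List T3 := [1,2,0,2,1,2,0,1].map (fun x => c + x)
def Y2 (c : T3) : List T3 := [1,0,2,1,2,0,2,1].map (fun x => c + x)

lemma s0_split (c : T3) : s0.map (fun x => c + x) = [c] ++ X c ++ [c] := by
  fin_cases c <;> decide

lemma X_split (c : T3) : X c = Y1 c ++ [c + 2] ++ Y2 c := by
  fin_cases c <;> decide

def Wd : ℕ → List T3
  | 0 => [0]
  | k+1 => phi (Wd k)

lemma Wd_length (k : ℕ) : (Wd k).length = 19 ^ k := by
  induction k with
  | zero => rfl
  | succ k ih => rw [Wd, length_phi, ih, pow_succ]; ring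

lemma Wd_reverse (k : ℕ) : (Wd k).reverse = Wd k := by
  induction k with
  | zero => rfl
  | succ k ih => rw [Wd, reverse_phi, ih]

lemma Wd_free (k : ℕ) : ¬ BadIdx (Wd k) := by
  induction k with
  | zero =>
    rintro ⟨i, q, n, hq, hl, hqn, _⟩
    simp [Wd] at hl
    omega
  | succ k ih => exact phi_free ih

lemma Wd_center (k : ℕ) : ∃ c a b, Wd (k+1) = a ++ X c ++ b ∧ a.length = b.length := by
  induction k with
  | zero =>
    refine ⟨0, [0], [0], ?_, rfl⟩
    show phi [0] = _
    decide
  | succ k ih =>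
    obtain ⟨c, a, b, he, hl⟩ := ih
    refine ⟨c + 2, phi a ++ phi (Y1 c) ++ [c+2], [c+2] ++ phi (Y2 c) ++ phi b, ?_, ?_⟩
    · show phi (Wd (k+1)) = _
      rw [he, phi_append, phi_append, X_split c, phi_append, phi_append,
        show phi [c+2] = s0.map (fun x => (c+2) + x) from by simp [phi],
        s0_split (c+2)]
      simp [List.append_assoc]
    · simp [length_phi, Y1, Y2, hl]
      omega

lemma wit_prefix (c : T3) : ([1,2,0,2,1,2,0].map (fun x => c + x)) <+: X c := by
  fin_cases c <;> decide

lemma wit_period (c : T3) : HasPeriod ([1,2,0,2,1,2,0].map (fun x => c + x)) 4 := by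
  refine ⟨by norm_num, by simp, ?_⟩
  intro i hi
  simp at hi
  have h3 : i = 0 ∨ i = 1 ∨ i = 2 := by omega
  rcases h3 with rfl | rfl | rfl <;> rfl

lemma pal_trim {w : List T3} (hp : w.reverse = w) {m l : ℕ} (h : 2*m + l = w.length) :
    ((w.drop m).take l).reverse = (w.drop m).take l := by
  rw [List.reverse_take, List.reverse_drop, hp, List.length_drop, List.drop_take,
    show w.length - m - (w.length - m - l) = l from by omega,
    show w.length - m - l = m from by omega]

end Dej

theorem exists_odd_ternary_palindrome_critexp_74 (ℓ : ℕ)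
    (hodd : Odd ℓ) (hlen : 17 ≤ ℓ) :
    ∃ w : List (Fin 3), w.length = ℓ ∧ w.reverse = w ∧
      ContainsPowGe w (7 / 4) ∧ ¬ ContainsPowGt w (7 / 4) := by
  classical
  obtain ⟨r, hr⟩ := hodd
  have hpow : ℓ < 19 ^ ℓ := Nat.lt_pow_self (by norm_num : 1 < 19)
  obtain ⟨c, a, b, he, hlab⟩ := Dej.Wd_center (ℓ - 1)
  rw [show ℓ - 1 + 1 = ℓ from by omega] at he
  set W := Dej.Wd ℓ with hW
  have hWlen : W.length = 19 ^ ℓ := Dej.Wd_length ℓ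
  have hodd19 : Odd (19 ^ ℓ) := Odd.pow (by decide)
  obtain ⟨s, hs⟩ := hodd19
  set m := (19 ^ ℓ - ℓ)/2 with hm
  have hm2 : 2*m + ℓ = 19 ^ ℓ := by omega
  have hXlen : (Dej.X c).length = 17 := by simp [Dej.X]
  have hlen_eq := congrArg List.length he
  rw [hWlen] at hlen_eq
  simp only [List.length_append, hXlen] at hlen_eq
  have hma : m ≤ a.length := by omega
  have hinf : (W.drop m).take ℓ <:+: W :=
    (List.take_prefix _ _).isInfix.trans (List.drop_suffix _ _).isInfix
  refine ⟨(W.drop m).take ℓ, ?_, ?_, ?_, ?_⟩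
  · simp [hWlen]
    omega
  · exact Dej.pal_trim (Dej.Wd_reverse ℓ) (by rw [hWlen]; omega)
  · -- contains a 7/4-power
    have hdecomp : (W.drop m).take ℓ =
        (a.drop m) ++ Dej.X c ++ (b.take (ℓ - (a.length - m) - 17)) := by
      rw [he, List.append_assoc, List.drop_append,
        show m - a.length = 0 from by omega, List.drop_zero,
        List.take_append, List.length_drop,
        List.take_of_length_le (show (a.drop m).length ≤ ℓ from by simp; omega),
        List.take_append,
        List.take_of_length_le (show (Dej.X c).length ≤ ℓ - (a.length - m) from by rw [hXlen]; omega),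
        hXlen, List.append_assoc]
    refine ⟨[1,2,0,2,1,2,0].map (fun x => c + x), 4, by simp, ?_, Dej.wit_period c, ?_⟩
    · exact (Dej.wit_prefix c).isInfix.trans
        ⟨a.drop m, b.take (ℓ - (a.length - m) - 17), hdecomp.symm⟩
    · simp only [List.length_map, List.length_cons, List.length_nil]
      norm_num
  · intro hgt
    exact Dej.Wd_free ℓ (Dej.badIdx_of_infix hinf ((Dej.containsPowGt_iff_badIdx _).mp hgt))
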